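/- arXiv:0904.1915 — 2 statements merged into one kernel-verified Lean document; each statement's English description precedes it below -/
import Mathlib

section
/- Let G be a connected graph, v0 a vertex, i ≥ 0, r ≥ 0, and let C be a connected component of the induced subgraph on the annulus G[i,i+2r]. Let w_1,...,w_l be the vertices of C at distance exactly i from v0. Form the graph C* by adding a new vertex v* adjacent to each of w_1,...,w_l. Then C* is connected and every vertex of C* is at distance at most 2r+1 from v*. -/
variable {V : Type*}

/-- The graph `C*` obtained from the induced subgraph of `G` on a set `C` by adding a
virtual vertex (`none`) adjacent to exactly the vertices of `C` at distance `i` from `v0`. -/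
def virtualExtension (G : SimpleGraph V) (C : Set V) (v0 : V) (i : ℕ) :
    SimpleGraph (Option C) where
  Adj x y :=
    match x, y with
    | some u, some w => G.Adj u w
    | some u, none => G.dist v0 u = i
    | none, some w => G.dist v0 w = i
    | none, none => False
  symm := by
    constructor
    intro x y h
    match x, y with
    | some u, some w => exact h.symm
    | some u, none => exact h
    | none, some w => exact h
    | none, none => exact h
  loopless := by
    constructor
    intro x h
    match x with
    | some u => exact G.irrefl h
    | none => exact h

private lemma exists_pred_aux {V : Type*} (G : SimpleGraph V) (hG : G.Connected)
    (v0 v : V) (d : ℕ) (h : G.dist v0 v = d + 1) :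
    ∃ u, G.Adj u v ∧ G.dist v0 u = d := by
  obtain ⟨p, hp⟩ := hG.exists_walk_length_eq_dist v0 v
  rw [h] at hp
  cases p with
  | nil => simp at hp
  | cons hadj q =>
    obtain ⟨x, q', h', hc⟩ := SimpleGraph.Walk.exists_cons_eq_concat hadj q
    refine ⟨x, h', le_antisymm ?_ ?_⟩
    · have : G.dist v0 x ≤ q'.length := SimpleGraph.dist_le q'
      have hlen : q'.length + 1 = d + 1 := by
        have := congrArg SimpleGraph.Walk.length hc
        simpa using this.symm.trans hp
      omega
    · have htri : G.dist v0 v ≤ G.dist v0 x + G.dist x v := hG.dist_triangle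
      have h1 : G.dist x v = 1 := SimpleGraph.dist_eq_one_iff_adj.mpr h'
      omega

private lemma exists_walk_aux {V : Type*} (G : SimpleGraph V) (hG : G.Connected)
    (v0 : V) (i r : ℕ) (C : Set V)
    (hCA : ∀ v ∈ C, i ≤ G.dist v0 v ∧ G.dist v0 v ≤ i + 2 * r)
    (hmax : ∀ u ∈ C, ∀ w : V, (i ≤ G.dist v0 w ∧ G.dist v0 w ≤ i + 2 * r) →
      G.Adj u w → w ∈ C) :
    ∀ k (v : V) (hv : v ∈ C), G.dist v0 v = i + k →
      ∃ p : (virtualExtension G C v0 i).Walk none (some ⟨v, hv⟩), p.length = k + 1 := by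
  intro k
  induction k with
  | zero =>
    intro v hv hd
    have hadj : (virtualExtension G C v0 i).Adj none (some ⟨v, hv⟩) := by
      show G.dist v0 v = i
      omega
    exact ⟨SimpleGraph.Walk.cons hadj SimpleGraph.Walk.nil, rfl⟩
  | succ k ih =>
    intro v hv hd
    obtain ⟨u, hu, hdu⟩ := exists_pred_aux G hG v0 v (i + k) (by omega)
    have huC : u ∈ C := by
      refine hmax v hv u ⟨by omega, ?_⟩ hu.symm
      have := (hCA v hv).2
      omega
    obtain ⟨p, hp⟩ := ih u huC hdu
    have hadj : (virtualExtension G C v0 i).Adj (some ⟨u, huC⟩) (some ⟨v, hv⟩) := hu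
    exact ⟨p.concat hadj, by simp [hp]⟩

/-- if `C` is a connected component of the induced subgraph of a connected
graph `G` on the annulus `G[i,i+2r]`, then the graph `C*` obtained by adding a virtual
vertex `v*` adjacent to the vertices of `C` at distance `i` from `v0` is connected, and
every vertex of `C*` is at distance at most `2r+1` from `v*`. -/
theorem virtualExtension_connected_and_bounded {V : Type*} [Fintype V]
    (G : SimpleGraph V) (hG : G.Connected) (v0 : V) (i r : ℕ) (C : Set V)
    (hCA : ∀ v ∈ C, i ≤ G.dist v0 v ∧ G.dist v0 v ≤ i + 2 * r)
    (hne : C.Nonempty)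
    (hconn : (G.induce C).Connected)
    (hmax : ∀ u ∈ C, ∀ w : V, (i ≤ G.dist v0 w ∧ G.dist v0 w ≤ i + 2 * r) →
      G.Adj u w → w ∈ C) :
    (virtualExtension G C v0 i).Connected ∧
      ∀ x : Option C, (virtualExtension G C v0 i).dist none x ≤ 2 * r + 1 := by
  have key : ∀ x : Option C, ∃ p : (virtualExtension G C v0 i).Walk none x,
      p.length ≤ 2 * r + 1 := by
    intro x
    match x with
    | none => exact ⟨SimpleGraph.Walk.nil, by simp⟩
    | some ⟨v, hv⟩ =>
      obtain ⟨h1, h2⟩ := hCA v hv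
      obtain ⟨p, hp⟩ := exists_walk_aux G hG v0 i r C hCA hmax (G.dist v0 v - i) v hv
        (by omega)
      exact ⟨p, by omega⟩
  constructor
  · rw [SimpleGraph.connected_iff]
    refine ⟨fun x y => ?_, ⟨none⟩⟩
    obtain ⟨px, _⟩ := key x
    obtain ⟨py, _⟩ := key y
    exact ⟨px.reverse.append py⟩
  · intro x
    obtain ⟨p, hp⟩ := key x
    exact le_trans (SimpleGraph.dist_le p) hp
end

section
/- Let G=(V,E) be a connected graph with a BFS tree T rooted at v0, and let i, r ≥ 0. Let C be a connected component of the induced subgraph on G[i,i+2r], let w_1,...,w_l be the vertices of C at distance i from v0, and let B ≠ B_0 be any block (biconnected component) of C* (the graph C with virtual vertex v* attached to w_1,...,w_l) other than the block B_0 containing v*. Then there is a single index j such that every vertex of B is a descendant of w_j in the BFS tree T. -/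
variable {V : Type*}

/-- A set of vertices is biconnected in `H` if it induces a connected subgraph that
remains preconnected after removing any single vertex (i.e. it has no cut vertex). -/
def IsBiconnectedSet {α : Type*} (H : SimpleGraph α) (B : Set α) : Prop :=
  (H.induce B).Connected ∧ ∀ x ∈ B, (H.induce (B \ {x})).Preconnected

/-- A block (biconnected component) of `H` is a maximal biconnected set of vertices. -/
def IsBlock {α : Type*} (H : SimpleGraph α) (B : Set α) : Prop :=
  IsBiconnectedSet H B ∧ ∀ B' : Set α, B ⊆ B' → IsBiconnectedSet H B' → B' = B

section Helpers

variable {α : Type*} {H : SimpleGraph α}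

lemma reach_mono {S T : Set α} (hST : S ⊆ T) {a b : S}
    (h : (H.induce S).Reachable a b) :
    (H.induce T).Reachable ⟨a.1, hST a.2⟩ ⟨b.1, hST b.2⟩ := by
  exact h.map (⟨fun x => ⟨x.1, hST x.2⟩, fun h => h⟩ : H.induce S →g H.induce T)

lemma fun_path_precon (n : ℕ) (F : ℕ → α)
    (hadj : ∀ k, k + 1 < n → H.Adj (F k) (F (k + 1))) :
    (H.induce {z | ∃ k < n, F k = z}).Preconnected := by
  have aux : ∀ k (hk : k < n),
      (H.induce {z | ∃ k < n, F k = z}).Reachable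
        ⟨F 0, ⟨0, Nat.pos_of_ne_zero (by omega), rfl⟩⟩ ⟨F k, ⟨k, hk, rfl⟩⟩ := by
    intro k hk
    induction k with
    | zero => rfl
    | succ k ih =>
      refine (ih (by omega)).trans ?_
      exact SimpleGraph.Adj.reachable (hadj k hk)
  rintro ⟨x, hx⟩ ⟨y, hy⟩
  obtain ⟨k, hk, rfl⟩ := hx
  obtain ⟨m, hm, rfl⟩ := hy
  exact (aux k hk).symm.trans (aux m hm)

lemma precon_of_set_eq {S T : Set α} (h : S = T)
    (hp : (H.induce S).Preconnected) : (H.induce T).Preconnected := h ▸ hp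

lemma fun_cycle_biconn (N : ℕ) (F : ℕ → α) (hN : 0 < N)
    (hinj : ∀ a < N, ∀ b < N, F a = F b → a = b)
    (hadj : ∀ k, k + 1 < N → H.Adj (F k) (F (k + 1)))
    (hcl : H.Adj (F (N - 1)) (F 0)) :
    IsBiconnectedSet H {z | ∃ k < N, F k = z} := by
  have hadj' : ∀ p < N, H.Adj (F p) (F ((p + 1) % N)) := by
    intro p hp
    rcases Nat.lt_or_ge (p + 1) N with h | h
    · rw [Nat.mod_eq_of_lt h]; exact hadj p h
    · have hpN : p = N - 1 := by omega
      have : (p + 1) % N = 0 := by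
        have : p + 1 = N := by omega
        simp [this]
      rw [this, hpN]; exact hcl
  constructor
  · haveI : Nonempty ↑{z | ∃ k < N, F k = z} := ⟨⟨F 0, ⟨0, hN, rfl⟩⟩⟩
    exact ⟨fun_path_precon N F hadj⟩
  · rintro x ⟨m, hm, rfl⟩
    set Fm : ℕ → α := fun k => F ((m + 1 + k) % N) with hFm
    have hkey : ∀ q < N, q ≠ m → ∃ k < N - 1, (m + 1 + k) % N = q := by
      intro q hq hqm
      rcases Nat.lt_or_ge m q with h | h
      · exact ⟨q - m - 1, by omega, by rw [Nat.mod_eq_of_lt (by omega)]; omega⟩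
      · refine ⟨q + N - m - 1, by omega, ?_⟩
        have : m + 1 + (q + N - m - 1) = q + N := by omega
        rw [this, Nat.add_mod_right, Nat.mod_eq_of_lt hq]
    have hne : ∀ k < N - 1, (m + 1 + k) % N ≠ m := by
      intro k hk he
      have hd := Nat.div_add_mod (m + 1 + k) N
      rw [he] at hd
      set d := (m + 1 + k) / N with hdd
      rcases Nat.eq_zero_or_pos d with h0 | h0
      · rw [h0, Nat.mul_zero] at hd; omega
      · have h1 : N ≤ N * d := Nat.le_mul_of_pos_right N h0
        omega
    have hset : {z | ∃ k < N, F k = z} \ {F m} = {z | ∃ k < N - 1, Fm k = z} := by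
      ext z
      simp only [Set.mem_diff, Set.mem_setOf_eq, Set.mem_singleton_iff, hFm]
      constructor
      · rintro ⟨⟨q, hq, rfl⟩, hzm⟩
        have hqm : q ≠ m := fun h => hzm (by rw [h])
        obtain ⟨k, hk, hke⟩ := hkey q hq hqm
        exact ⟨k, hk, by rw [hke]⟩
      · rintro ⟨k, hk, rfl⟩
        have h1 : (m + 1 + k) % N < N := Nat.mod_lt _ hN
        refine ⟨⟨_, h1, rfl⟩, fun he => ?_⟩
        exact hne k hk (hinj _ h1 _ hm he)
    refine precon_of_set_eq hset.symm (fun_path_precon (N - 1) Fm ?_)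
    intro k hk
    have h1 : (m + 1 + k) % N < N := Nat.mod_lt _ hN
    have h2 : (m + 1 + (k + 1)) % N = ((m + 1 + k) % N + 1) % N := by
      conv_lhs => rw [show m + 1 + (k + 1) = (m + 1 + k) + 1 by omega]
      rw [Nat.add_mod (m + 1 + k) 1 N, Nat.mod_eq_of_lt (show 1 < N by omega)]
    rw [hFm]
    simp only
    rw [h2]
    exact hadj' _ h1

lemma reach_anchor {S T : Set α} (hST : S ⊆ T)
    (hpre : (H.induce S).Preconnected) {a x : α} (ha : a ∈ S) (hx : x ∈ S) :
    (H.induce T).Reachable ⟨a, hST ha⟩ ⟨x, hST hx⟩ :=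
  reach_mono hST (hpre ⟨a, ha⟩ ⟨x, hx⟩)

lemma union_biconn {B1 B2 : Set α} (h1 : IsBiconnectedSet H B1)
    (h2 : IsBiconnectedSet H B2) {x y : α}
    (hx1 : x ∈ B1) (hx2 : x ∈ B2) (hy1 : y ∈ B1) (hy2 : y ∈ B2) (hxy : x ≠ y) :
    IsBiconnectedSet H (B1 ∪ B2) := by
  constructor
  · haveI : Nonempty ↑(B1 ∪ B2) := ⟨⟨x, Or.inl hx1⟩⟩
    refine ⟨?_⟩
    have key : ∀ a (ha : a ∈ B1 ∪ B2),
        (H.induce (B1 ∪ B2)).Reachable ⟨a, ha⟩ ⟨x, Or.inl hx1⟩ := by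
      intro a ha
      rcases ha with h | h
      · exact reach_anchor Set.subset_union_left h1.1.preconnected h hx1
      · exact reach_anchor Set.subset_union_right h2.1.preconnected h hx2
    rintro ⟨a, ha⟩ ⟨b, hb⟩
    exact (key a ha).trans (key b hb).symm
  · intro z hz
    have pre1 : (H.induce (B1 \ {z})).Preconnected := by
      by_cases h : z ∈ B1
      · exact h1.2 z h
      · rw [Set.diff_singleton_eq_self h]; exact h1.1.preconnected
    have pre2 : (H.induce (B2 \ {z})).Preconnected := by
      by_cases h : z ∈ B2
      · exact h2.2 z h
      · rw [Set.diff_singleton_eq_self h]; exact h2.1.preconnected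
    obtain ⟨w, hw1, hw2, hwz⟩ : ∃ w, w ∈ B1 ∧ w ∈ B2 ∧ w ≠ z := by
      by_cases hxz : x = z
      · exact ⟨y, hy1, hy2, fun h => hxy (hxz ▸ h ▸ rfl)⟩
      · exact ⟨x, hx1, hx2, hxz⟩
    have hs1 : B1 \ {z} ⊆ (B1 ∪ B2) \ {z} := Set.diff_subset_diff_left Set.subset_union_left
    have hs2 : B2 \ {z} ⊆ (B1 ∪ B2) \ {z} := Set.diff_subset_diff_left Set.subset_union_right
    have key : ∀ a (ha : a ∈ (B1 ∪ B2) \ {z}),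
        (H.induce ((B1 ∪ B2) \ {z})).Reachable ⟨a, ha⟩
          ⟨w, hs1 ⟨hw1, hwz⟩⟩ := by
      intro a ha
      rcases ha.1 with h | h
      · exact reach_anchor hs1 pre1 ⟨h, ha.2⟩ ⟨hw1, hwz⟩
      · exact reach_anchor hs2 pre2 ⟨h, ha.2⟩ ⟨hw2, hwz⟩
    rintro ⟨a, ha⟩ ⟨b, hb⟩
    exact (key a ha).trans (key b hb).symm

end Helpers

/-- let `C` be a connected component of the annulus `G[i,i+2r]` of a
connected graph `G` with BFS tree rooted at `v0` given by the parent function `par`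
(so the depth of a vertex equals its distance from `v0`), and let `C*` be `C` with a
virtual vertex attached to the vertices of `C` at distance `i` from `v0`. Then every
block `B` of `C*` not containing the virtual vertex has all its vertices descendants
(under iterated `par`) of a single vertex `w` of `C` at distance `i` from `v0`. -/
theorem block_descends_from_single_w {V : Type*} [Fintype V]
    (G : SimpleGraph V) (hG : G.Connected) (v0 : V) (par : V → V)
    (hpar0 : par v0 = v0)
    (hparAdj : ∀ v : V, v ≠ v0 → G.Adj (par v) v)
    (hparDepth : ∀ v : V, v ≠ v0 → G.dist v0 (par v) + 1 = G.dist v0 v)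
    (hparRoot : ∀ v : V, ∃ n : ℕ, par^[n] v = v0)
    (i r : ℕ) (C : Set V)
    (hCA : ∀ v ∈ C, i ≤ G.dist v0 v ∧ G.dist v0 v ≤ i + 2 * r)
    (hne : C.Nonempty)
    (hconn : (G.induce C).Connected)
    (hmax : ∀ u ∈ C, ∀ w : V, (i ≤ G.dist v0 w ∧ G.dist v0 w ≤ i + 2 * r) →
      G.Adj u w → w ∈ C)
    (B : Set (Option C))
    (hB : IsBlock (virtualExtension G C v0 i) B)
    (hvB : none ∉ B) :
    ∃ w ∈ C, G.dist v0 w = i ∧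
      ∀ x : C, some x ∈ B → ∃ n : ℕ, par^[n] (x : V) = w := by
  classical
  set H := virtualExtension G C v0 i with hH
  -- the ancestor chain stays in C and loses depth one by one
  have key : ∀ v, v ∈ C → ∀ k, k + i ≤ G.dist v0 v →
      par^[k] v ∈ C ∧ G.dist v0 (par^[k] v) = G.dist v0 v - k := by
    intro v hv k
    induction k with
    | zero => intro _; exact ⟨hv, by simp⟩
    | succ k ih =>
      intro h
      obtain ⟨hu, hdu⟩ := ih (by omega)
      have hub := hCA v hv
      have hune : par^[k] v ≠ v0 := by
        intro e
        rw [e, SimpleGraph.dist_self] at hdu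
        omega
      have hd := hparDepth _ hune
      have hadj := hparAdj _ hune
      rw [Function.iterate_succ_apply']
      exact ⟨hmax _ hu _ ⟨by omega, by omega⟩ hadj.symm, by omega⟩
  have hanc : ∀ v, v ∈ C → par^[G.dist v0 v - i] v ∈ C ∧
      G.dist v0 (par^[G.dist v0 v - i] v) = i := by
    intro v hv
    have hi := (hCA v hv).1
    obtain ⟨h1, h2⟩ := key v hv (G.dist v0 v - i) (by omega)
    exact ⟨h1, by omega⟩
  set A : V → V := fun v => par^[G.dist v0 v - i] v with hA
  have merge : ∀ u v : V, u ∈ C → v ∈ C → ∀ a b : ℕ,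
      a + i ≤ G.dist v0 u → b + i ≤ G.dist v0 v →
      par^[a] u = par^[b] v → A u = A v := by
    intro u v hu hv a b ha hb he
    have h1 := key u hu a ha
    have h2 := key v hv b hb
    have hi1 := (hCA _ h1.1).1
    have hdep : G.dist v0 u - a = G.dist v0 v - b := by rw [← h1.2, ← h2.2, he]
    have e1 : G.dist v0 u - i = (G.dist v0 u - i - a) + a := by omega
    have e2 : G.dist v0 v - i = (G.dist v0 v - i - b) + b := by omega
    have e3 : G.dist v0 u - i - a = G.dist v0 v - i - b := by omega
    simp only [hA]
    rw [e1, e2, Function.iterate_add_apply, Function.iterate_add_apply, he, e3]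
  by_cases hsame : ∀ p q : C, some p ∈ B → some q ∈ B → A ↑p = A ↑q
  · obtain ⟨b0⟩ := hB.1.1.nonempty
    obtain ⟨x0, hx0⟩ : ∃ x0 : C, some x0 ∈ B := by
      obtain ⟨z, hz⟩ := b0
      cases z with
      | none => exact absurd hz hvB
      | some c => exact ⟨c, hz⟩
    refine ⟨A ↑x0, (hanc _ x0.2).1, (hanc _ x0.2).2, ?_⟩
    intro x hx
    exact ⟨G.dist v0 ↑x - i, hsame x x0 hx hx0⟩
  · exfalso
    push_neg at hsame
    obtain ⟨p, q, hp, hq, hpq⟩ := hsame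
    -- extract an adjacent pair in B with different ancestors
    have extract : ∀ (a b : ↥B) (w : (H.induce B).Walk a b) (p q : C),
        a.1 = some p → b.1 = some q → A ↑p ≠ A ↑q →
        ∃ u v : C, some u ∈ B ∧ some v ∈ B ∧ G.Adj ↑u ↑v ∧ A (↑u) ≠ A (↑v) := by
      intro a b w
      induction w with
      | nil =>
        intro p q hsp hdq hne'
        rw [hsp] at hdq
        exact absurd (by rw [Option.some.injEq] at hdq; rw [hdq]) hne'
      | @cons s c d hadj w ih =>
        intro p q hsp hdq hne'
        obtain ⟨m, hcm⟩ : ∃ m : C, c.1 = some m := by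
          cases hc1 : c.1 with
          | none => exact absurd (hc1 ▸ c.2) hvB
          | some m => exact ⟨m, rfl⟩
        by_cases hAm : A ↑p = A ↑m
        · exact ih m q hcm hdq (fun h => hne' (hAm.trans h))
        · have hadj' : H.Adj s.1 c.1 := hadj
          rw [hsp, hcm] at hadj'
          exact ⟨p, m, hsp ▸ s.2, hcm ▸ c.2, hadj', hAm⟩
    obtain ⟨w⟩ := hB.1.1.preconnected ⟨some p, hp⟩ ⟨some q, hq⟩
    obtain ⟨u, v, hu, hv, hGadj, hAne⟩ := extract _ _ w p q rfl rfl hpq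
    have hiu : i ≤ G.dist v0 ↑u := (hCA _ u.2).1
    have hiv : i ≤ G.dist v0 ↑v := (hCA _ v.2).1
    set dv := G.dist v0 (↑v : V) with hdv
    set du := G.dist v0 (↑u : V) with hdu
    set pv := dv - i with hpv
    set pu := du - i with hpu
    set N := pv + pu + 3 with hNN
    set F : ℕ → Option ↥C := fun k =>
      if h0 : k = 0 then none
      else if h1 : k ≤ pv + 1 then
        some ⟨par^[pv + 1 - k] ↑v, (key ↑v v.2 (pv + 1 - k) (by omega)).1⟩
      else if h2 : k ≤ pv + pu + 2 then
        some ⟨par^[k - (pv + 2)] ↑u, (key ↑u u.2 (k - (pv + 2)) (by omega)).1⟩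
      else none
      with hF
    have hF0 : F 0 = none := by simp [hF]
    have hFv : ∀ k, 1 ≤ k → k ≤ pv + 1 →
        ∃ c : ↥C, F k = some c ∧ (c : V) = par^[pv + 1 - k] ↑v := by
      intro k h1 h2
      refine ⟨⟨par^[pv + 1 - k] ↑v, (key ↑v v.2 _ (by omega)).1⟩, ?_, rfl⟩
      simp only [hF]
      rw [dif_neg (by omega), dif_pos h2]
    have hFu : ∀ k, pv + 2 ≤ k → k ≤ pv + pu + 2 →
        ∃ c : ↥C, F k = some c ∧ (c : V) = par^[k - (pv + 2)] ↑u := by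
      intro k h1 h2
      refine ⟨⟨par^[k - (pv + 2)] ↑u, (key ↑u u.2 _ (by omega)).1⟩, ?_, rfl⟩
      simp only [hF]
      rw [dif_neg (by omega), dif_neg (by omega), dif_pos h2]
    have cls : ∀ k, k < N → k = 0 ∨ (1 ≤ k ∧ k ≤ pv + 1) ∨
        (pv + 2 ≤ k ∧ k ≤ pv + pu + 2) := by intro k hk; omega
    have hinj : ∀ a, a < N → ∀ b, b < N → F a = F b → a = b := by
      intro a ha b hb he
      rcases cls a ha with h0a | hva | hua <;> rcases cls b hb with h0b | hvb | hub
      · omega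
      · obtain ⟨c, hc, _⟩ := hFv b hvb.1 hvb.2
        rw [h0a, hF0, hc] at he; simp at he
      · obtain ⟨c, hc, _⟩ := hFu b hub.1 hub.2
        rw [h0a, hF0, hc] at he; simp at he
      · obtain ⟨c, hc, _⟩ := hFv a hva.1 hva.2
        rw [h0b, hF0, hc] at he; simp at he
      · obtain ⟨c1, hc1, hval1⟩ := hFv a hva.1 hva.2
        obtain ⟨c2, hc2, hval2⟩ := hFv b hvb.1 hvb.2
        rw [hc1, hc2, Option.some.injEq] at he
        have hvv : par^[pv + 1 - a] (↑v : V) = par^[pv + 1 - b] ↑v := by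
          rw [← hval1, ← hval2, he]
        have d1 := (key ↑v v.2 (pv + 1 - a) (by omega)).2
        have d2 := (key ↑v v.2 (pv + 1 - b) (by omega)).2
        rw [hvv, d2] at d1
        omega
      · obtain ⟨c1, hc1, hval1⟩ := hFv a hva.1 hva.2
        obtain ⟨c2, hc2, hval2⟩ := hFu b hub.1 hub.2
        rw [hc1, hc2, Option.some.injEq] at he
        have hvv : par^[b - (pv + 2)] (↑u : V) = par^[pv + 1 - a] ↑v := by
          rw [← hval1, ← hval2, he]
        exact absurd (merge ↑u ↑v u.2 v.2 _ _ (by omega) (by omega) hvv) hAne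
      · obtain ⟨c, hc, _⟩ := hFu a hua.1 hua.2
        rw [h0b, hF0, hc] at he; simp at he
      · obtain ⟨c1, hc1, hval1⟩ := hFu a hua.1 hua.2
        obtain ⟨c2, hc2, hval2⟩ := hFv b hvb.1 hvb.2
        rw [hc1, hc2, Option.some.injEq] at he
        have hvv : par^[a - (pv + 2)] (↑u : V) = par^[pv + 1 - b] ↑v := by
          rw [← hval1, ← hval2, he]
        exact absurd (merge ↑u ↑v u.2 v.2 _ _ (by omega) (by omega) hvv) hAne
      · obtain ⟨c1, hc1, hval1⟩ := hFu a hua.1 hua.2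
        obtain ⟨c2, hc2, hval2⟩ := hFu b hub.1 hub.2
        rw [hc1, hc2, Option.some.injEq] at he
        have hvv : par^[a - (pv + 2)] (↑u : V) = par^[b - (pv + 2)] ↑u := by
          rw [← hval1, ← hval2, he]
        have d1 := (key ↑u u.2 (a - (pv + 2)) (by omega)).2
        have d2 := (key ↑u u.2 (b - (pv + 2)) (by omega)).2
        rw [hvv, d2] at d1
        omega
    have hadjF : ∀ k, k + 1 < N → H.Adj (F k) (F (k + 1)) := by
      intro k hk
      have hcases : k = 0 ∨ (1 ≤ k ∧ k ≤ pv) ∨ k = pv + 1 ∨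
          (pv + 2 ≤ k ∧ k ≤ pv + pu + 1) := by omega
      rcases hcases with h0 | hmid | hjoin | humid
      · subst h0
        obtain ⟨c, hc, hval⟩ := hFv 1 le_rfl (by omega)
        rw [hF0, hc]
        show G.dist v0 ↑c = i
        have := (key ↑v v.2 (pv + 1 - 1) (by omega)).2
        rw [hval]
        omega
      · obtain ⟨c1, hc1, hval1⟩ := hFv k hmid.1 (by omega)
        obtain ⟨c2, hc2, hval2⟩ := hFv (k + 1) (by omega) (by omega)
        rw [hc1, hc2]
        show G.Adj ↑c1 ↑c2
        have e2 : pv + 1 - (k + 1) = pv - k := by omega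
        rw [e2] at hval2
        have hxd := (key ↑v v.2 (pv - k) (by omega)).2
        have hxne : par^[pv - k] (↑v : V) ≠ v0 := by
          intro e; rw [e, SimpleGraph.dist_self] at hxd; omega
        have hpa := hparAdj _ hxne
        have hpa' : G.Adj (par^[pv - k + 1] (↑v : V)) (par^[pv - k] ↑v) := by
          rw [Function.iterate_succ_apply']; exact hpa
        have e1 : pv - k + 1 = pv + 1 - k := by omega
        rw [e1] at hpa'
        rw [hval1, hval2]
        exact hpa'
      · subst hjoin
        obtain ⟨c1, hc1, hval1⟩ := hFv (pv + 1) (by omega) le_rfl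
        obtain ⟨c2, hc2, hval2⟩ := hFu (pv + 2) le_rfl (by omega)
        rw [hc1, hc2]
        show G.Adj ↑c1 ↑c2
        rw [hval1, hval2]
        simp only [Nat.sub_self, Nat.add_sub_cancel, Function.iterate_zero_apply]
        exact hGadj.symm
      · obtain ⟨c1, hc1, hval1⟩ := hFu k humid.1 (by omega)
        obtain ⟨c2, hc2, hval2⟩ := hFu (k + 1) (by omega) (by omega)
        rw [hc1, hc2]
        show G.Adj ↑c1 ↑c2
        have e2 : k + 1 - (pv + 2) = (k - (pv + 2)) + 1 := by omega
        rw [e2] at hval2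
        have hxd := (key ↑u u.2 (k - (pv + 2)) (by omega)).2
        have hxne : par^[k - (pv + 2)] (↑u : V) ≠ v0 := by
          intro e; rw [e, SimpleGraph.dist_self] at hxd; omega
        have hpa := hparAdj _ hxne
        have hpa' : G.Adj (par^[k - (pv + 2) + 1] (↑u : V)) (par^[k - (pv + 2)] ↑u) := by
          rw [Function.iterate_succ_apply']; exact hpa
        rw [hval1, hval2]
        exact hpa'.symm
    have hcl : H.Adj (F (N - 1)) (F 0) := by
      obtain ⟨c, hc, hval⟩ := hFu (pv + pu + 2) (by omega) le_rfl
      have : N - 1 = pv + pu + 2 := by omega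
      rw [this, hc, hF0]
      show G.dist v0 ↑c = i
      have := (key ↑u u.2 (pv + pu + 2 - (pv + 2)) (by omega)).2
      rw [hval]
      omega
    obtain ⟨cv, hcv, hcvval⟩ := hFv (pv + 1) (by omega) le_rfl
    have hcveq : cv = v := by
      apply Subtype.ext
      rw [hcvval]
      have : pv + 1 - (pv + 1) = 0 := by omega
      rw [this, Function.iterate_zero_apply]
    obtain ⟨cu, hcu, hcuval⟩ := hFu (pv + 2) le_rfl (by omega)
    have hcueq : cu = u := by
      apply Subtype.ext
      rw [hcuval]
      have : pv + 2 - (pv + 2) = 0 := by omega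
      rw [this, Function.iterate_zero_apply]
    have hSbc : IsBiconnectedSet H {z : Option ↥C | ∃ k < N, F k = z} :=
      fun_cycle_biconn N F (by omega) hinj hadjF hcl
    have hvS : (some v : Option ↥C) ∈ {z : Option ↥C | ∃ k < N, F k = z} :=
      ⟨pv + 1, by omega, by rw [hcv, hcveq]⟩
    have huS : (some u : Option ↥C) ∈ {z : Option ↥C | ∃ k < N, F k = z} :=
      ⟨pv + 2, by omega, by rw [hcu, hcueq]⟩
    have hnoneS : (none : Option ↥C) ∈ {z : Option ↥C | ∃ k < N, F k = z} :=
      ⟨0, by omega, hF0⟩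
    have huv : (some u : Option ↥C) ≠ some v := by
      intro h
      rw [Option.some.injEq] at h
      exact G.ne_of_adj hGadj (by rw [h])
    have hBS := union_biconn hB.1 hSbc hu huS hv hvS huv
    have heq := hB.2 _ Set.subset_union_left hBS
    exact hvB (heq ▸ (Or.inr hnoneS : (none : Option ↥C) ∈ B ∪ _))
end
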